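/- Let 1 < a < 2, R ≥ 2, and set g(ρ) = 2(1+ρ)^{−a} and Z_{−1}(ρ) = 2ρ²/(1+ρ²). Define φ(ρ) = Z_{−1}(ρ) ∫_ρ^{4R} (1/(r Z_{−1}(r)²)) (∫₀^r g(s) Z_{−1}(s) s ds) dr for ρ ∈ (0, 4R]. Then φ satisfies ℒ_{−1}[φ] + g = 0 on (0, 4R), φ(4R) = 0, and there is a constant C depending only on a (not on R) such that |φ(ρ)| ≤ C R^{2−a} for all ρ ∈ (0, 4R]. -/

import Mathlib

noncomputable section

open Real Set MeasureTheory

/-- The 1-corrotational harmonic map profile `w(ρ) = π - 2 arctan ρ`. -/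
def wfun (ρ : ℝ) : ℝ := Real.pi - 2 * Real.arctan ρ

/-- The mode-`k` operator `ℒ_k[φ](ρ) = φ'' + φ'/ρ − (k² + 2k cos w + cos 2w) φ/ρ²`. -/
def Lmode (k : ℤ) (φ : ℝ → ℝ) (ρ : ℝ) : ℝ :=
  deriv (deriv φ) ρ + deriv φ ρ / ρ
    - ((k : ℝ) ^ 2 + 2 * (k : ℝ) * Real.cos (wfun ρ) + Real.cos (2 * wfun ρ)) * φ ρ / ρ ^ 2

/-- The kernel element `Z₋₁(ρ) = 2ρ²/(1+ρ²)` of `ℒ₋₁`. -/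
def Zneg1 (ρ : ℝ) : ℝ := 2 * ρ ^ 2 / (1 + ρ ^ 2)

/-- The right-hand side `g(ρ) = 2(1+ρ)^{-a}`. -/
def gfun (a ρ : ℝ) : ℝ := 2 * (1 + ρ) ^ (-a)

/-- The variation-of-parameters solution
`φ(ρ) = Z₋₁(ρ) ∫_ρ^{4R} (1/(r Z₋₁(r)²)) (∫₀^r g(s) Z₋₁(s) s ds) dr`. -/
def phiNeg1 (a R ρ : ℝ) : ℝ :=
  Zneg1 ρ * ∫ r in ρ..(4 * R),
    (1 / (r * Zneg1 r ^ 2)) * ∫ s in (0 : ℝ)..r, gfun a s * Zneg1 s * s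

/-- Auxiliary: inner integral. -/
def Gint (a r : ℝ) : ℝ := ∫ s in (0 : ℝ)..r, gfun a s * Zneg1 s * s

/-- Auxiliary: integrand of the outer integral. -/
def hfun (a r : ℝ) : ℝ := (1 / (r * Zneg1 r ^ 2)) * Gint a r

/-- Auxiliary: outer integral. -/
def Ffun (a R ρ : ℝ) : ℝ := ∫ r in ρ..(4 * R), hfun a r

lemma one_add_sq_pos (x : ℝ) : (0:ℝ) < 1 + x ^ 2 := by positivity

lemma contZ : Continuous Zneg1 := by
  apply Continuous.div (by continuity) (by continuity)
  intro x; exact (one_add_sq_pos x).ne'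

lemma Z_nonneg (x : ℝ) : 0 ≤ Zneg1 x := by
  unfold Zneg1; positivity

lemma Z_pos {x : ℝ} (hx : 0 < x) : 0 < Zneg1 x := by
  unfold Zneg1; positivity

lemma Z_le_two (x : ℝ) : Zneg1 x ≤ 2 := by
  unfold Zneg1
  rw [div_le_iff₀ (one_add_sq_pos x)]
  nlinarith [sq_nonneg x]

lemma g_contAt {a s : ℝ} (hs : -1 < s) : ContinuousAt (gfun a) s := by
  apply ContinuousAt.mul continuousAt_const
  apply Real.continuousAt_rpow_const _ _ (Or.inl (by linarith))
  |>.comp (by fun_prop)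

lemma u_contAt {a s : ℝ} (hs : -1 < s) :
    ContinuousAt (fun s => gfun a s * Zneg1 s * s) s :=
  ((g_contAt hs).mul contZ.continuousAt).mul continuousAt_id

lemma u_contOn (a : ℝ) : ContinuousOn (fun s => gfun a s * Zneg1 s * s) (Ioi (-1)) :=
  fun s hs => (u_contAt hs).continuousWithinAt

lemma u_intble {a r : ℝ} (hr : 0 ≤ r) :
    IntervalIntegrable (fun s => gfun a s * Zneg1 s * s) volume 0 r := by
  apply ContinuousOn.intervalIntegrable
  apply (u_contOn a).mono
  rw [uIcc_of_le hr]
  intro x hx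
  exact lt_of_lt_of_le (by norm_num) hx.1

lemma G_hasDeriv {a r : ℝ} (hr : 0 < r) :
    HasDerivAt (Gint a) (gfun a r * Zneg1 r * r) r := by
  apply intervalIntegral.integral_hasDerivAt_right (u_intble hr.le)
  · exact (u_contOn a).stronglyMeasurableAtFilter isOpen_Ioi r (mem_Ioi.mpr (by linarith))
  · exact u_contAt (by linarith)

lemma G_contAt {a r : ℝ} (hr : 0 < r) : ContinuousAt (Gint a) r :=
  (G_hasDeriv hr).continuousAt

lemma h_contOn (a : ℝ) : ContinuousOn (hfun a) (Ioi 0) := by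
  intro r hr
  simp only [mem_Ioi] at hr
  apply ContinuousAt.continuousWithinAt
  apply ContinuousAt.mul _ (G_contAt hr)
  apply ContinuousAt.div continuousAt_const (continuousAt_id.mul (contZ.continuousAt.pow 2))
  exact (mul_pos hr (pow_pos (Z_pos hr) 2)).ne'

lemma g_nonneg {a s : ℝ} (hs : 0 ≤ s) : 0 ≤ gfun a s := by
  unfold gfun
  have := Real.rpow_nonneg (by linarith : (0:ℝ) ≤ 1 + s) (-a)
  linarith

lemma g_le_two {a s : ℝ} (ha : 0 < a) (hs : 0 ≤ s) : gfun a s ≤ 2 := by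
  unfold gfun
  nlinarith [Real.rpow_le_one_of_one_le_of_nonpos (by linarith : (1:ℝ) ≤ 1 + s)
    (by linarith : -a ≤ 0)]

lemma u_nonneg {a s : ℝ} (hs : 0 ≤ s) : 0 ≤ gfun a s * Zneg1 s * s :=
  mul_nonneg (mul_nonneg (g_nonneg hs) (Z_nonneg s)) hs

lemma G_nonneg {a r : ℝ} (hr : 0 ≤ r) : 0 ≤ Gint a r := by
  apply intervalIntegral.integral_nonneg hr
  intro s hs; exact u_nonneg hs.1

lemma Z_le_sq {s : ℝ} : Zneg1 s ≤ 2 * s ^ 2 := by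
  unfold Zneg1
  rw [div_le_iff₀ (one_add_sq_pos s)]
  nlinarith [sq_nonneg s, sq_nonneg (s^2)]

lemma G_le_pow4 {a r : ℝ} (ha : 0 < a) (hr : 0 ≤ r) : Gint a r ≤ r ^ 4 := by
  have : Gint a r ≤ ∫ s in (0:ℝ)..r, 4 * s ^ 3 := by
    apply intervalIntegral.integral_mono_on hr (u_intble hr) ((continuous_const.mul (continuous_pow 3)).intervalIntegrable _ _)
    intro s hs
    have h1 : gfun a s ≤ 2 := g_le_two ha hs.1
    have h2 : Zneg1 s ≤ 2 * s ^ 2 := Z_le_sq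
    have hgz : gfun a s * Zneg1 s ≤ 2 * (2 * s ^ 2) :=
      mul_le_mul h1 h2 (Z_nonneg s) (by norm_num)
    have := mul_le_mul_of_nonneg_right hgz hs.1
    show gfun a s * Zneg1 s * s ≤ 4 * s ^ 3
    nlinarith
  calc Gint a r ≤ ∫ s in (0:ℝ)..r, 4 * s ^ 3 := this
    _ = r ^ 4 := by
        rw [intervalIntegral.integral_const_mul, integral_pow]
        ring

lemma G_le_rpow {a r : ℝ} (ha1 : 1 < a) (ha2 : a < 2) (hr : 0 ≤ r) :
    Gint a r ≤ 4 / (2 - a) * r ^ (2 - a) := by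
  have hint : IntervalIntegrable (fun s : ℝ => 4 * s ^ (1 - a)) volume 0 r :=
    (intervalIntegral.intervalIntegrable_rpow' (by linarith)).const_mul 4
  have : Gint a r ≤ ∫ s in (0:ℝ)..r, 4 * s ^ (1 - a) := by
    apply intervalIntegral.integral_mono_on hr (u_intble hr) hint
    intro s hs
    rcases eq_or_lt_of_le hs.1 with h0 | h0
    · rw [← h0]
      simp [Real.zero_rpow (by linarith : (1:ℝ) - a ≠ 0)]
    · have hg : gfun a s ≤ 2 * s ^ (-a) := by
        unfold gfun
        have := Real.rpow_le_rpow_of_nonpos h0 (by linarith : s ≤ 1 + s)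
          (by linarith : -a ≤ 0)
        linarith
      have hZs : Zneg1 s * s ≤ 2 * s := by
        nlinarith [Z_le_two s, Z_nonneg s]
      have key : gfun a s * (Zneg1 s * s) ≤ (2 * s ^ (-a)) * (2 * s) := by
        apply mul_le_mul hg hZs (mul_nonneg (Z_nonneg s) h0.le)
        exact mul_nonneg (by norm_num) (Real.rpow_nonneg h0.le _)
      have : (2 * s ^ (-a)) * (2 * s) = 4 * s ^ (1 - a) := by
        rw [show (1 : ℝ) - a = -a + 1 by ring, Real.rpow_add h0, Real.rpow_one]
        ring
      rw [mul_assoc]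
      exact le_of_le_of_eq key this
  calc Gint a r ≤ ∫ s in (0:ℝ)..r, 4 * s ^ (1 - a) := this
    _ = 4 / (2 - a) * r ^ (2 - a) := by
        rw [intervalIntegral.integral_const_mul, integral_rpow (Or.inl (by linarith))]
        rw [show (1:ℝ) - a + 1 = 2 - a by ring,
            Real.zero_rpow (by linarith : (2:ℝ) - a ≠ 0)]
        ring

lemma h_nonneg {a r : ℝ} (hr : 0 < r) : 0 ≤ hfun a r := by
  unfold hfun
  have := Z_pos hr
  have := G_nonneg (a := a) hr.le
  positivity

lemma P_eq {r : ℝ} (hr : 0 < r) :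
    1 / (r * Zneg1 r ^ 2) = (1 + r ^ 2) ^ 2 / (4 * r ^ 5) := by
  unfold Zneg1
  have h1 := one_add_sq_pos r
  field_simp
  ring

lemma h_le {a r : ℝ} (ha1 : 1 < a) (ha2 : a < 2) (hr : 0 < r) :
    hfun a r ≤ r ^ (-3 : ℝ) + 4 / (2 - a) * r ^ (1 - a) := by
  have hG0 := G_nonneg (a := a) hr.le
  have hP0 : 0 < (1 + r ^ 2) ^ 2 / (4 * r ^ 5) := by positivity
  have hfe : hfun a r = (1 + r ^ 2) ^ 2 / (4 * r ^ 5) * Gint a r := by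
    unfold hfun; rw [P_eq hr]
  have hr3 : r ^ (-3:ℝ) = 1 / r ^ 3 := by
    rw [show (-3:ℝ) = -(3:ℕ) by norm_num, Real.rpow_neg hr.le, Real.rpow_natCast, one_div]
  rcases le_total r 1 with h1 | h1
  · -- r ≤ 1 : hfun ≤ 1/r ≤ 1/r³ = r^{-3}
    have hG : Gint a r ≤ r ^ 4 := G_le_pow4 (by linarith) hr.le
    have hf1 : hfun a r ≤ 1 / r ^ 3 := by
      rw [hfe]
      rw [div_mul_eq_mul_div, div_le_div_iff₀ (by positivity) (by positivity)]
      have hsq : (1 + r ^ 2) ^ 2 ≤ 4 := by nlinarith [pow_le_one₀ hr.le h1 (n := 2), sq_nonneg r]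
      calc (1 + r ^ 2) ^ 2 * Gint a r * r ^ 3 ≤ 4 * (r ^ 4 * r ^ 3) := by
            nlinarith [pow_nonneg hr.le 3, pow_nonneg hr.le 4,
              mul_le_mul hsq hG hG0 (by norm_num)]
        _ ≤ 1 * (4 * r ^ 5) := by nlinarith [pow_pos hr 5, pow_le_one₀ hr.le h1 (n := 2)]
    have h2 : (0:ℝ) ≤ 4 / (2 - a) * r ^ (1 - a) := by
      have := Real.rpow_nonneg hr.le (1 - a)
      have h2a : (0:ℝ) < 2 - a := by linarith
      positivity
    rw [hr3]; linarith
  · -- 1 ≤ r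
    have hG : Gint a r ≤ 4 / (2 - a) * r ^ (2 - a) := G_le_rpow ha1 ha2 hr.le
    have hf1 : hfun a r ≤ 4 / (2 - a) * r ^ (1 - a) := by
      rw [hfe]
      have hPle : (1 + r ^ 2) ^ 2 / (4 * r ^ 5) ≤ 1 / r := by
        rw [div_le_div_iff₀ (by positivity) hr]
        nlinarith [pow_le_pow_right₀ h1 (show 2 ≤ 4 by norm_num), pow_pos hr 4]
      have h2a : (0:ℝ) < 2 - a := by linarith
      have hmul : r ^ ((1:ℝ) - a) * r ^ (1:ℝ) = r ^ ((2:ℝ) - a) := by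
        rw [← Real.rpow_add hr]; congr 1; ring
      have hcalc : 1 / r * (4 / (2 - a) * r ^ (2 - a)) = 4 / (2 - a) * r ^ (1 - a) := by
        rw [← hmul, Real.rpow_one]
        field_simp
      calc (1 + r ^ 2) ^ 2 / (4 * r ^ 5) * Gint a r
          ≤ 1 / r * (4 / (2 - a) * r ^ (2 - a)) := by
            apply mul_le_mul hPle hG hG0 (by positivity)
        _ = 4 / (2 - a) * r ^ (1 - a) := hcalc
    have : (0:ℝ) ≤ r ^ (-3:ℝ) := Real.rpow_nonneg hr.le _
    linarith

lemma phi_bound {a : ℝ} (ha1 : 1 < a) (ha2 : a < 2) {R : ℝ} (hR : 2 ≤ R)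
    {ρ : ℝ} (hρ : 0 < ρ) (hle : ρ ≤ 4 * R) :
    Zneg1 ρ * Ffun a R ρ ≤ (1 + 128 / (2 - a) ^ 2) * R ^ (2 - a) ∧
      0 ≤ Zneg1 ρ * Ffun a R ρ := by
  have h2a : (0:ℝ) < 2 - a := by linarith
  have hb : (0:ℝ) < 4 * R := by linarith
  have hsub : uIcc ρ (4 * R) ⊆ Ioi 0 := by
    rw [uIcc_of_le hle]
    intro x hx; exact lt_of_lt_of_le hρ hx.1
  have hInth : IntervalIntegrable (hfun a) volume ρ (4 * R) :=
    ((h_contOn a).mono hsub).intervalIntegrable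
  have hIntH : IntervalIntegrable (fun r : ℝ => r ^ (-3:ℝ) + 4 / (2 - a) * r ^ (1 - a))
      volume ρ (4 * R) := by
    apply IntervalIntegrable.add
    · exact intervalIntegral.intervalIntegrable_rpow
        (Or.inr (fun h => absurd (hsub h) (by simp)))
    · exact (intervalIntegral.intervalIntegrable_rpow' (by linarith)).const_mul _
  have hF0 : 0 ≤ Ffun a R ρ := by
    apply intervalIntegral.integral_nonneg hle
    intro u hu; exact h_nonneg (lt_of_lt_of_le hρ hu.1)
  have hFle : Ffun a R ρ ≤ ∫ r in ρ..(4*R), (r ^ (-3:ℝ) + 4 / (2 - a) * r ^ (1 - a)) := by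
    apply intervalIntegral.integral_mono_on hle hInth hIntH
    intro x hx; exact h_le ha1 ha2 (lt_of_lt_of_le hρ hx.1)
  have hval : (∫ r in ρ..(4*R), (r ^ (-3:ℝ) + 4 / (2 - a) * r ^ (1 - a)))
      = ((4*R) ^ (-2:ℝ) - ρ ^ (-2:ℝ)) / (-2) + 4 / (2-a) * (((4*R) ^ (2-a) - ρ ^ (2-a)) / (2-a)) := by
    rw [intervalIntegral.integral_add
        (intervalIntegral.intervalIntegrable_rpow (Or.inr (fun h => absurd (hsub h) (by simp))))
        ((intervalIntegral.intervalIntegrable_rpow' (by linarith)).const_mul _),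
      intervalIntegral.integral_const_mul,
      integral_rpow (Or.inr ⟨by norm_num, fun h => absurd (hsub h) (by simp)⟩),
      integral_rpow (Or.inl (by linarith))]
    norm_num [show (1:ℝ) - a + 1 = 2 - a by ring]
  -- bound the two pieces
  have hρ2 : ρ ^ (-2:ℝ) = 1 / ρ ^ 2 := by
    rw [show (-2:ℝ) = -(2:ℕ) by norm_num, Real.rpow_neg hρ.le, Real.rpow_natCast, one_div]
  have hb2 : (0:ℝ) ≤ (4*R) ^ (-2:ℝ) := Real.rpow_nonneg hb.le _
  have hρ2a : (0:ℝ) ≤ ρ ^ (2-a) := Real.rpow_nonneg hρ.le _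
  have hFle2 : Ffun a R ρ ≤ 1 / ρ ^ 2 / 2 + 4 / (2-a) ^ 2 * (4*R) ^ (2-a) := by
    rw [hval] at hFle
    have e1 : ((4*R) ^ (-2:ℝ) - ρ ^ (-2:ℝ)) / (-2) ≤ 1 / ρ ^ 2 / 2 := by
      have : ((4*R) ^ (-2:ℝ) - ρ ^ (-2:ℝ)) / (-2) = (ρ ^ (-2:ℝ) - (4*R) ^ (-2:ℝ)) / 2 := by
        ring
      rw [this, ← hρ2]
      linarith
    have e2 : 4 / (2-a) * (((4*R) ^ (2-a) - ρ ^ (2-a)) / (2-a)) ≤ 4 / (2-a)^2 * (4*R) ^ (2-a) := by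
      have heq : 4 / (2-a) * (((4*R) ^ (2-a) - ρ ^ (2-a)) / (2-a))
          = 4 / (2-a)^2 * ((4*R) ^ (2-a) - ρ ^ (2-a)) := by
        rw [sq]; field_simp
      rw [heq]
      apply mul_le_mul_of_nonneg_left _ (by positivity)
      linarith
    linarith
  -- finish
  set X := R ^ (2-a) with hX
  have hX1 : (1:ℝ) ≤ X := Real.one_le_rpow (by linarith) h2a.le
  have hZρ := Z_nonneg ρ
  have hZ2 := Z_le_two ρ
  have hc : (0:ℝ) < 4 / (2-a)^2 := by positivity
  have key : Zneg1 ρ * Ffun a R ρ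
      ≤ Zneg1 ρ * (1 / ρ ^ 2 / 2) + Zneg1 ρ * (4 / (2-a)^2 * (4*R) ^ (2-a)) := by
    rw [← mul_add]
    exact mul_le_mul_of_nonneg_left hFle2 hZρ
  have t1 : Zneg1 ρ * (1 / ρ ^ 2 / 2) ≤ 1 := by
    have heq : Zneg1 ρ * (1 / ρ ^ 2 / 2) = 1 / (1 + ρ ^ 2) := by
      unfold Zneg1
      field_simp
    rw [heq]
    rw [div_le_one (one_add_sq_pos ρ)]
    nlinarith [sq_nonneg ρ]
  have h4R : (4*R) ^ (2-a) ≤ 16 * X := by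
    rw [Real.mul_rpow (by norm_num) (by linarith : (0:ℝ) ≤ R)]
    apply mul_le_mul_of_nonneg_right _ (Real.rpow_nonneg (by linarith) _)
    calc (4:ℝ) ^ (2-a) ≤ (4:ℝ) ^ (2:ℝ) :=
          Real.rpow_le_rpow_of_exponent_le (by norm_num) (by linarith)
      _ = 16 := by
          rw [show (2:ℝ) = ((2:ℕ):ℝ) by norm_num, Real.rpow_natCast]; norm_num
  have t2 : Zneg1 ρ * (4 / (2-a)^2 * (4*R) ^ (2-a)) ≤ 128 / (2-a)^2 * X := by
    have : Zneg1 ρ * (4 / (2-a)^2 * (4*R) ^ (2-a)) ≤ 2 * (4 / (2-a)^2 * (16 * X)) := by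
      apply mul_le_mul hZ2 _ _ (by norm_num)
      · exact mul_le_mul_of_nonneg_left h4R hc.le
      · exact mul_nonneg hc.le (Real.rpow_nonneg hb.le _)
    calc Zneg1 ρ * (4 / (2-a)^2 * (4*R) ^ (2-a)) ≤ 2 * (4 / (2-a)^2 * (16 * X)) := this
      _ = 128 / (2-a)^2 * X := by ring
  constructor
  · have : Zneg1 ρ * Ffun a R ρ ≤ 1 + 128 / (2-a)^2 * X := by linarith
    have hcX : 0 ≤ 128 / (2-a)^2 := by positivity
    nlinarith
  · exact mul_nonneg hZρ hF0

lemma cos_wfun (x : ℝ) : Real.cos (wfun x) = (x ^ 2 - 1) / (1 + x ^ 2) := by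
  unfold wfun
  rw [Real.cos_pi_sub, Real.cos_two_mul, Real.cos_sq_arctan]
  have := one_add_sq_pos x
  field_simp
  ring

lemma cos_two_wfun (x : ℝ) :
    Real.cos (2 * wfun x) = 2 * ((x ^ 2 - 1) / (1 + x ^ 2)) ^ 2 - 1 := by
  rw [Real.cos_two_mul, cos_wfun]

lemma phi_eq (a R : ℝ) : phiNeg1 a R = fun ρ => Zneg1 ρ * Ffun a R ρ := rfl

lemma Z_hasDeriv (x : ℝ) : HasDerivAt Zneg1 (4 * x / (1 + x ^ 2) ^ 2) x := by
  have h1 : HasDerivAt (fun x : ℝ => 2 * x ^ 2) (4 * x) x := by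
    have h := (hasDerivAt_pow 2 x).const_mul 2
    refine h.congr_deriv ?_
    simp
    ring
  have h2 : HasDerivAt (fun x : ℝ => 1 + x ^ 2) (2 * x) x := by
    simpa using (hasDerivAt_pow 2 x).const_add 1
  have := h1.div h2 (one_add_sq_pos x).ne'
  refine this.congr_deriv ?_
  field_simp
  ring

lemma Z'_hasDeriv (x : ℝ) :
    HasDerivAt (fun x : ℝ => 4 * x / (1 + x ^ 2) ^ 2) ((4 - 12 * x ^ 2) / (1 + x ^ 2) ^ 3) x := by
  have h1 : HasDerivAt (fun x : ℝ => 4 * x) 4 x := by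
    simpa using (hasDerivAt_id x).const_mul 4
  have h2 : HasDerivAt (fun x : ℝ => 1 + x ^ 2) (2 * x) x := by
    simpa using (hasDerivAt_pow 2 x).const_add 1
  have h3 := h2.pow 2
  have := h1.div h3 (pow_ne_zero 2 (one_add_sq_pos x).ne')
  refine this.congr_deriv ?_
  simp only [Pi.pow_apply]
  have h4 := (one_add_sq_pos x).ne'
  field_simp
  ring

lemma den_hasDeriv {r : ℝ} :
    HasDerivAt (fun r : ℝ => r * Zneg1 r ^ 2)
      (1 * Zneg1 r ^ 2 + r * (2 * Zneg1 r ^ 1 * (4 * r / (1 + r ^ 2) ^ 2))) r :=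
  (hasDerivAt_id r).mul ((Z_hasDeriv r).pow 2)

lemma hfun_eq (a : ℝ) : hfun a = fun r => Gint a r / (r * Zneg1 r ^ 2) := by
  funext r; exact one_div_mul_eq_div _ _

lemma h_hasDeriv {a r : ℝ} (hr : 0 < r) :
    HasDerivAt (hfun a)
      ((gfun a r * Zneg1 r * r * (r * Zneg1 r ^ 2)
        - Gint a r * (1 * Zneg1 r ^ 2 + r * (2 * Zneg1 r ^ 1 * (4 * r / (1 + r ^ 2) ^ 2))))
        / (r * Zneg1 r ^ 2) ^ 2) r := by
  rw [hfun_eq]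
  exact (G_hasDeriv hr).div den_hasDeriv (mul_pos hr (pow_pos (Z_pos hr) 2)).ne'

lemma F_hasDeriv {a R x : ℝ} (hx : 0 < x) (hR : 0 < R) :
    HasDerivAt (Ffun a R) (-(hfun a x)) x := by
  have hsub : uIcc x (4 * R) ⊆ Ioi 0 := by
    intro y hy
    rcases le_total x (4 * R) with h | h
    · rw [uIcc_of_le h] at hy; exact lt_of_lt_of_le hx hy.1
    · rw [uIcc_of_ge h] at hy; exact lt_of_lt_of_le (by linarith) hy.1
  exact intervalIntegral.integral_hasDerivAt_left
    (((h_contOn a).mono hsub).intervalIntegrable)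
    ((h_contOn a).stronglyMeasurableAtFilter isOpen_Ioi x hx)
    ((h_contOn a).continuousAt (isOpen_Ioi.mem_nhds hx))

theorem ode_part (a R : ℝ) (hR : 0 < R) (ρ : ℝ) (hρ : 0 < ρ) (hρR : ρ < 4 * R) :
    Lmode (-1) (phiNeg1 a R) ρ + gfun a ρ = 0 := by
  set ψ : ℝ → ℝ := fun x => 4 * x / (1 + x ^ 2) ^ 2 * Ffun a R x + Zneg1 x * (-(hfun a x))
    with hψdef
  have key1 : ∀ x ∈ Ioi (0:ℝ), HasDerivAt (phiNeg1 a R) (ψ x) x := by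
    intro x hx
    rw [phi_eq]
    exact (Z_hasDeriv x).mul (F_hasDeriv hx hR)
  have deriv1 : deriv (phiNeg1 a R) ρ = ψ ρ := (key1 ρ hρ).deriv
  have evtl : deriv (phiNeg1 a R) =ᶠ[nhds ρ] ψ := by
    filter_upwards [isOpen_Ioi.mem_nhds hρ] with x hx
    exact (key1 x hx).deriv
  have hψderiv : HasDerivAt ψ
      ((4 - 12 * ρ ^ 2) / (1 + ρ ^ 2) ^ 3 * Ffun a R ρ
        + 4 * ρ / (1 + ρ ^ 2) ^ 2 * (-(hfun a ρ))
        + (4 * ρ / (1 + ρ ^ 2) ^ 2 * (-(hfun a ρ))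
          + Zneg1 ρ * (-((gfun a ρ * Zneg1 ρ * ρ * (ρ * Zneg1 ρ ^ 2)
            - Gint a ρ * (1 * Zneg1 ρ ^ 2 + ρ * (2 * Zneg1 ρ ^ 1 * (4 * ρ / (1 + ρ ^ 2) ^ 2))))
            / (ρ * Zneg1 ρ ^ 2) ^ 2)))) ρ :=
    ((Z'_hasDeriv ρ).mul (F_hasDeriv hρ hR)).add ((Z_hasDeriv ρ).mul (h_hasDeriv hρ).neg)
  have deriv2 : deriv (deriv (phiNeg1 a R)) ρ = _ := evtl.deriv_eq.trans hψderiv.deriv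
  have hZρ := (Z_pos hρ).ne'
  have h1ρ := (one_add_sq_pos ρ).ne'
  rw [Lmode, deriv2, deriv1, phi_eq, cos_wfun, cos_two_wfun]
  simp only [hψdef, hfun, Zneg1, Int.cast_neg, Int.cast_one]
  field_simp
  ring

/-- The variation-of-parameters solution at mode `-1` solves `ℒ₋₁[φ] + g = 0` on `(0, 4R)`,
vanishes at `4R`, and satisfies `|φ(ρ)| ≤ C R^{2-a}` with `C` depending only on `a`. -/
theorem mode_neg_one_barrier (a : ℝ) (ha1 : 1 < a) (ha2 : a < 2) :
    ∃ C > 0, ∀ R : ℝ, 2 ≤ R →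
      (∀ ρ : ℝ, 0 < ρ → ρ < 4 * R → Lmode (-1) (phiNeg1 a R) ρ + gfun a ρ = 0) ∧
      phiNeg1 a R (4 * R) = 0 ∧
      (∀ ρ : ℝ, 0 < ρ → ρ ≤ 4 * R → |phiNeg1 a R ρ| ≤ C * R ^ (2 - a)) := by
  have h2a : (0:ℝ) < 2 - a := by linarith
  refine ⟨1 + 128 / (2 - a) ^ 2, by positivity, fun R hR => ?_⟩
  have hR0 : (0:ℝ) < R := by linarith
  refine ⟨fun ρ hρ hρR => ode_part a R hR0 ρ hρ hρR, ?_, fun ρ hρ hle => ?_⟩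
  · rw [phi_eq]
    simp [Ffun, intervalIntegral.integral_same]
  · rw [phi_eq]
    obtain ⟨hub, hnn⟩ := phi_bound ha1 ha2 hR hρ hle
    rw [abs_of_nonneg hnn]
    exact hub
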